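/- Let v₁, v₂, v₃ ∈ ℂ³ be orthonormal with respect to the real inner product Re⟨·,·⟩. Then Re Φ(v₁,v₂,v₃) ≤ 1, and equality holds if and only if the complex 3×3 matrix M with columns v₁, v₂, v₃ lies in SU(3) (M is unitary and det M = 1). In particular, if Re Φ(v₁,v₂,v₃) = 1 then ω(v_j, v_k) = 0 for all j, k, so the real span of v₁, v₂, v₃ is a Lagrangian subspace; that is, Re Φ is a calibration on ℂ³ whose calibrated 3-planes are special Lagrangian. -/

import Mathlib

/-- The complex volume form `Φ = dz₁ ∧ dz₂ ∧ dz₃` on `ℂ³`, evaluated on the triple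
of vectors `v 0, v 1, v 2`: the determinant of the complex matrix with columns
`v 0, v 1, v 2`. -/
noncomputable def PhiForm (v : Fin 3 → EuclideanSpace ℂ (Fin 3)) : ℂ :=
  (Matrix.of fun i j : Fin 3 => v j i).det

/-- The fundamental (Kähler) 2-form `ω(x, y) = Im ⟨x, y⟩` on `ℂ³`. -/
noncomputable def omegaForm (x y : EuclideanSpace ℂ (Fin 3)) : ℝ :=
  (inner ℂ x y : ℂ).im

open Matrix

/-- if `v₁, v₂, v₃ ∈ ℂ³` are orthonormal for the real inner product,
then `Re Φ(v₁,v₂,v₃) ≤ 1`, with equality iff the matrix `M` with columns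
`v₁, v₂, v₃` lies in `SU(3)`; in particular, if `Re Φ(v₁,v₂,v₃) = 1` then
`ω(v_j, v_k) = 0` for all `j, k`, so the real span of `v₁, v₂, v₃` is Lagrangian:
`Re Φ` is a calibration whose calibrated 3-planes are special Lagrangian. -/
theorem re_Phi_le_one_of_real_orthonormal
    (v : Fin 3 → EuclideanSpace ℂ (Fin 3))
    (hv : ∀ j k : Fin 3, (inner ℂ (v j) (v k) : ℂ).re = if j = k then 1 else 0) :
    (PhiForm v).re ≤ 1 ∧
    ((PhiForm v).re = 1 ↔
      ((Matrix.of fun i j : Fin 3 => v j i) ∈ Matrix.unitaryGroup (Fin 3) ℂ ∧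
        (Matrix.of fun i j : Fin 3 => v j i).det = 1)) ∧
    ((PhiForm v).re = 1 → ∀ j k : Fin 3, omegaForm (v j) (v k) = 0) := by
  classical
  set M : Matrix (Fin 3) (Fin 3) ℂ := Matrix.of fun i j : Fin 3 => v j i with hM
  have hMHM : ∀ j k : Fin 3, (Mᴴ * M) j k = (inner ℂ (v j) (v k) : ℂ) := by
    intro j k
    simp [Matrix.mul_apply, Matrix.conjTranspose_apply, hM, PiLp.inner_apply,
      RCLike.inner_apply]
    exact Finset.sum_congr rfl fun _ _ => mul_comm _ _
  set a : ℝ := (inner ℂ (v 0) (v 1) : ℂ).im with ha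
  set b : ℝ := (inner ℂ (v 0) (v 2) : ℂ).im with hb
  set c : ℝ := (inner ℂ (v 1) (v 2) : ℂ).im with hc
  have hdiag : ∀ j : Fin 3, (inner ℂ (v j) (v j) : ℂ) = 1 := by
    intro j
    apply Complex.ext
    · simpa using hv j j
    · simpa using inner_self_im (𝕜 := ℂ) (v j)
  have hsym : ∀ j k : Fin 3, (inner ℂ (v k) (v j) : ℂ) = (starRingEnd ℂ) (inner ℂ (v j) (v k) : ℂ) :=
    fun j k => (inner_conj_symm (v k) (v j)).symm
  have h01 : (inner ℂ (v 0) (v 1) : ℂ) = (a : ℂ) * Complex.I := by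
    apply Complex.ext
    · rw [hv 0 1]; simp
    · rw [ha]; simp
  have h02 : (inner ℂ (v 0) (v 2) : ℂ) = (b : ℂ) * Complex.I := by
    apply Complex.ext
    · rw [hv 0 2]; simp
    · rw [hb]; simp
  have h12 : (inner ℂ (v 1) (v 2) : ℂ) = (c : ℂ) * Complex.I := by
    apply Complex.ext
    · rw [hv 1 2]; simp
    · rw [hc]; simp
  have h10 : (inner ℂ (v 1) (v 0) : ℂ) = -((a : ℂ) * Complex.I) := by
    rw [hsym 0 1, h01]; simp [Complex.ext_iff]
  have h20 : (inner ℂ (v 2) (v 0) : ℂ) = -((b : ℂ) * Complex.I) := by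
    rw [hsym 0 2, h02]; simp [Complex.ext_iff]
  have h21 : (inner ℂ (v 2) (v 1) : ℂ) = -((c : ℂ) * Complex.I) := by
    rw [hsym 1 2, h12]; simp [Complex.ext_iff]
  have hG : Mᴴ * M = !![1, (a : ℂ) * Complex.I, (b : ℂ) * Complex.I;
      -((a : ℂ) * Complex.I), 1, (c : ℂ) * Complex.I;
      -((b : ℂ) * Complex.I), -((c : ℂ) * Complex.I), 1] := by
    ext j k
    fin_cases j <;> fin_cases k <;>
      simp only [hMHM, hdiag] <;>
      simp [hdiag 0, hdiag 1, hdiag 2, h01, h02, h12, h10, h20, h21]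
  have hdet : (starRingEnd ℂ) M.det * M.det = ((1 - (a ^ 2 + b ^ 2 + c ^ 2) : ℝ) : ℂ) := by
    have h1 : (Mᴴ * M).det = (starRingEnd ℂ) M.det * M.det := by
      rw [Matrix.det_mul, Matrix.det_conjTranspose]; rfl
    rw [hG] at h1
    rw [← h1, Matrix.det_fin_three]
    push_cast
    simp [Complex.ext_iff]
    constructor <;> ring_nf <;> simp [← Complex.ofReal_pow] <;> ring
  have hns : Complex.normSq M.det = 1 - (a ^ 2 + b ^ 2 + c ^ 2) := by
    have h2 : ((Complex.normSq M.det : ℝ) : ℂ) = ((1 - (a ^ 2 + b ^ 2 + c ^ 2) : ℝ) : ℂ) := by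
      rw [Complex.normSq_eq_conj_mul_self, hdet]
    exact_mod_cast h2
  have hd : PhiForm v = M.det := rfl
  have hre2 : M.det.re ^ 2 + M.det.im ^ 2 = 1 - (a ^ 2 + b ^ 2 + c ^ 2) := by
    rw [← hns, Complex.normSq_apply]; ring
  have key : (PhiForm v).re = 1 → a = 0 ∧ b = 0 ∧ c = 0 ∧ M.det = 1 := by
    intro hre
    rw [hd] at hre
    have ha0 : a = 0 := by nlinarith [sq_nonneg a, sq_nonneg b, sq_nonneg c, sq_nonneg M.det.im]
    have hb0 : b = 0 := by nlinarith [sq_nonneg a, sq_nonneg b, sq_nonneg c, sq_nonneg M.det.im]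
    have hc0 : c = 0 := by nlinarith [sq_nonneg a, sq_nonneg b, sq_nonneg c, sq_nonneg M.det.im]
    have him : M.det.im = 0 := by nlinarith [sq_nonneg a, sq_nonneg b, sq_nonneg c, sq_nonneg M.det.im]
    exact ⟨ha0, hb0, hc0, Complex.ext (by simpa using hre) (by simpa using him)⟩
  refine ⟨?_, ?_, ?_⟩
  · rw [hd]
    nlinarith [sq_nonneg a, sq_nonneg b, sq_nonneg c, sq_nonneg M.det.im,
      sq_nonneg (M.det.re - 1)]
  · constructor
    · intro hre
      obtain ⟨ha0, hb0, hc0, hd1⟩ := key hre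
      refine ⟨?_, hd1⟩
      rw [Matrix.mem_unitaryGroup_iff']
      have : star M = Mᴴ := rfl
      rw [this, hG, ha0, hb0, hc0]
      norm_num
      exact Matrix.one_fin_three.symm
    · rintro ⟨hu, hd1⟩
      rw [hd]
      rw [show M.det = (Matrix.of fun i j : Fin 3 => v j i).det from rfl, hd1]
      simp
  · intro hre j k
    obtain ⟨ha0, hb0, hc0, _⟩ := key hre
    fin_cases j <;> fin_cases k <;>
      simp only [omegaForm, hdiag] <;>
      simp [omegaForm, h01, h02, h12, h10, h20, h21, hdiag 0, hdiag 1, hdiag 2, ha0, hb0, hc0]
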